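/- arXiv:2104.06319 — 11 statements merged into one kernel-verified Lean document; each statement's English description precedes it below -/
import Mathlib

section
/- Let m, ω : ℝ → ℝ be continuous, let y : ℝ → ℝ be differentiable, and let F : ℝ → ℝ be continuously differentiable, such that t ↦ m(t)F(y(t))F′(y(t))y′(t) is differentiable. Suppose that for all t one has (d/dt)(m(t)F(y(t))F′(y(t))y′(t)) = m(t)(F′(y(t))²y′(t)² − F(y(t))²ω(t)²). Then at every point t where F(y(t)) ≠ 0 and t ↦ m(t)F′(y(t))y′(t) is differentiable, (d/dt)(m(t)F′(y(t))y′(t)) + m(t)ω(t)²F(y(t)) = 0. -/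
/-- Closedness of the generalized one-form
Λ = m F(y)F′(y)y′ Q dQ + (1/2) m Q² (F′(y)²y′² − F(y)²ω²) dt,
i.e. (d/dt)(m F(y)F′(y)y′) = m (F′(y)²y′² − F(y)²ω²), implies
(d/dt)(m F′(y)y′) + m ω² F(y) = 0 wherever F(y) ≠ 0 and m F′(y) y′ is differentiable. -/
theorem eisenhart_duval_closed_one_form_generalized
    (m ω y F : ℝ → ℝ)
    (hm : Continuous m) (hω : Continuous ω)
    (hy : Differentiable ℝ y) (hF : ContDiff ℝ 1 F)
    (hdiff : Differentiable ℝ (fun t => m t * F (y t) * deriv F (y t) * deriv y t))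
    (hclosed : ∀ t, deriv (fun s => m s * F (y s) * deriv F (y s) * deriv y s) t
      = m t * ((deriv F (y t)) ^ 2 * (deriv y t) ^ 2 - (F (y t)) ^ 2 * (ω t) ^ 2)) :
    ∀ t, F (y t) ≠ 0 → DifferentiableAt ℝ (fun s => m s * deriv F (y s) * deriv y s) t →
      deriv (fun s => m s * deriv F (y s) * deriv y s) t + m t * (ω t) ^ 2 * F (y t) = 0 := by
  intro t hFy hg
  have hFdiff : Differentiable ℝ F := hF.differentiable one_ne_zero
  have hh : DifferentiableAt ℝ (fun s => F (y s)) t := (hFdiff (y t)).comp t (hy t)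
  have key := hclosed t
  have heq : (fun s => m s * F (y s) * deriv F (y s) * deriv y s)
      = fun s => F (y s) * (m s * deriv F (y s) * deriv y s) := by
    funext s; ring
  have hdh : deriv (fun s => F (y s)) t = deriv F (y t) * deriv y t :=
    deriv_comp t (hFdiff.differentiableAt) (hy t)
  rw [heq, deriv_fun_mul hh hg, hdh] at key
  have h2 : F (y t) * (deriv (fun s => m s * deriv F (y s) * deriv y s) t
      + m t * (ω t) ^ 2 * F (y t)) = F (y t) * 0 := by
    rw [mul_zero]; linear_combination key
  exact mul_left_cancel₀ hFy h2
end

section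
/- Let ω : ℝ → ℝ be differentiable and nonvanishing and let x, y : ℝ → ℝ be twice differentiable functions satisfying the parametric Kapitza equations (d/dt)(x′/ω) + ω x + ω y = 0 and (d/dt)(y′/ω) + ω y − ω x = 0. Then I₁(t) = (1/2)[(x′(t)/ω(t))² − (y′(t)/ω(t))²] + (1/2)(x(t)² − y(t)²) + x(t)y(t) is constant in t. -/
/-- Along solutions of the parametric Kapitza equations,
I₁ = (1/2)[(x′/ω)² − (y′/ω)²] + (1/2)(x² − y²) + xy is constant. -/
theorem parametric_kapitza_first_integral_I1
    (ω x y : ℝ → ℝ)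
    (hω : Differentiable ℝ ω) (hω0 : ∀ t, ω t ≠ 0)
    (hx : Differentiable ℝ x) (hx' : Differentiable ℝ (deriv x))
    (hy : Differentiable ℝ y) (hy' : Differentiable ℝ (deriv y))
    (heq1 : ∀ t, deriv (fun s => deriv x s / ω s) t + ω t * x t + ω t * y t = 0)
    (heq2 : ∀ t, deriv (fun s => deriv y s / ω s) t + ω t * y t - ω t * x t = 0) :
    ∀ t₁ t₂ : ℝ,
      (1 / 2) * ((deriv x t₁ / ω t₁) ^ 2 - (deriv y t₁ / ω t₁) ^ 2)
        + (1 / 2) * ((x t₁) ^ 2 - (y t₁) ^ 2) + x t₁ * y t₁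
      = (1 / 2) * ((deriv x t₂ / ω t₂) ^ 2 - (deriv y t₂ / ω t₂) ^ 2)
        + (1 / 2) * ((x t₂) ^ 2 - (y t₂) ^ 2) + x t₂ * y t₂ := by
  set u : ℝ → ℝ := fun s => deriv x s / ω s with hu
  set v : ℝ → ℝ := fun s => deriv y s / ω s with hv
  have hud : Differentiable ℝ u := hx'.div hω (fun t => hω0 t)
  have hvd : Differentiable ℝ v := hy'.div hω (fun t => hω0 t)
  set I : ℝ → ℝ := fun t =>
    (1 / 2) * ((u t) ^ 2 - (v t) ^ 2) + (1 / 2) * ((x t) ^ 2 - (y t) ^ 2) + x t * y t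
    with hI
  have key : ∀ t₁ t₂ : ℝ, I t₁ = I t₂ := by
    have hdiff : Differentiable ℝ I := by
      fun_prop
    have hderiv : ∀ t, deriv I t = 0 := by
      intro t
      have hu' : deriv u t = -(ω t * x t + ω t * y t) := by
        have := heq1 t; linarith
      have hv' : deriv v t = -(ω t * y t - ω t * x t) := by
        have := heq2 t; linarith
      have hxu : deriv x t = ω t * u t := by
        simp only [hu]; exact (mul_div_cancel₀ _ (hω0 t)).symm
      have hyv : deriv y t = ω t * v t := by
        simp only [hv]; exact (mul_div_cancel₀ _ (hω0 t)).symm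
      have : HasDerivAt I
          ((1/2) * (2 * u t * deriv u t - 2 * v t * deriv v t)
            + (1/2) * (2 * x t * deriv x t - 2 * y t * deriv y t)
            + (deriv x t * y t + x t * deriv y t)) t := by
        have h1 : HasDerivAt u (deriv u t) t := (hud t).hasDerivAt
        have h2 : HasDerivAt v (deriv v t) t := (hvd t).hasDerivAt
        have h3 : HasDerivAt x (deriv x t) t := (hx t).hasDerivAt
        have h4 : HasDerivAt y (deriv y t) t := (hy t).hasDerivAt
        have := ((((h1.pow 2).sub (h2.pow 2)).const_mul (1/2:ℝ)).add
          (((h3.pow 2).sub (h4.pow 2)).const_mul (1/2:ℝ))).add (h3.mul h4)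
        refine this.congr_deriv ?_
        ring
      rw [this.deriv, hu', hv', hxu, hyv]
      ring
    intro t₁ t₂
    exact is_const_of_deriv_eq_zero hdiff hderiv t₁ t₂
  exact key
end

section
/- Let ω : ℝ → ℝ be differentiable and nonvanishing and let x, y : ℝ → ℝ be twice differentiable functions satisfying the parametric Kapitza equations (d/dt)(x′/ω) + ω x + ω y = 0 and (d/dt)(y′/ω) + ω y − ω x = 0. Then I₂(t) = (x′(t)/ω(t))·(y′(t)/ω(t)) − (1/2)(x(t)² − y(t)²) + x(t)y(t) is constant in t. -/
/-- Along solutions of the parametric Kapitza equations,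
I₂ = (x′/ω)(y′/ω) − (1/2)(x² − y²) + xy is constant. -/
theorem parametric_kapitza_first_integral_I2
    (ω x y : ℝ → ℝ)
    (hω : Differentiable ℝ ω) (hω0 : ∀ t, ω t ≠ 0)
    (hx : Differentiable ℝ x) (hx' : Differentiable ℝ (deriv x))
    (hy : Differentiable ℝ y) (hy' : Differentiable ℝ (deriv y))
    (heq1 : ∀ t, deriv (fun s => deriv x s / ω s) t + ω t * x t + ω t * y t = 0)
    (heq2 : ∀ t, deriv (fun s => deriv y s / ω s) t + ω t * y t - ω t * x t = 0) :
    ∀ t₁ t₂ : ℝ,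
      (deriv x t₁ / ω t₁) * (deriv y t₁ / ω t₁)
        - (1 / 2) * ((x t₁) ^ 2 - (y t₁) ^ 2) + x t₁ * y t₁
      = (deriv x t₂ / ω t₂) * (deriv y t₂ / ω t₂)
        - (1 / 2) * ((x t₂) ^ 2 - (y t₂) ^ 2) + x t₂ * y t₂ := by
  set u : ℝ → ℝ := fun s => deriv x s / ω s with hu_def
  set v : ℝ → ℝ := fun s => deriv y s / ω s with hv_def
  have hu : Differentiable ℝ u := hx'.div hω hω0
  have hv : Differentiable ℝ v := hy'.div hω hω0
  set I : ℝ → ℝ :=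
    fun s => u s * v s - (1/2) * ((x s)^2 - (y s)^2) + x s * y s with hI_def
  have key : ∀ t, HasDerivAt I 0 t := by
    intro t
    have hxd : deriv x t = u t * ω t := (div_mul_cancel₀ _ (hω0 t)).symm
    have hyd : deriv y t = v t * ω t := (div_mul_cancel₀ _ (hω0 t)).symm
    have h1 : HasDerivAt u (-(ω t * x t + ω t * y t)) t := by
      have h := (hu t).hasDerivAt
      have : deriv u t = -(ω t * x t + ω t * y t) := by
        have := heq1 t; linarith
      rwa [this] at h
    have h2 : HasDerivAt v (-(ω t * y t - ω t * x t)) t := by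
      have h := (hv t).hasDerivAt
      have : deriv v t = -(ω t * y t - ω t * x t) := by
        have := heq2 t; linarith
      rwa [this] at h
    have hX : HasDerivAt x (deriv x t) t := (hx t).hasDerivAt
    have hY : HasDerivAt y (deriv y t) t := (hy t).hasDerivAt
    have H : HasDerivAt I
        ((-(ω t * x t + ω t * y t)) * v t + u t * (-(ω t * y t - ω t * x t))
          - (1/2) * ((2:ℕ) * x t ^ 1 * deriv x t - (2:ℕ) * y t ^ 1 * deriv y t)
          + (deriv x t * y t + x t * deriv y t)) t :=
      ((h1.mul h2).sub (((hX.pow 2).sub (hY.pow 2)).const_mul (1/2))).add (hX.mul hY)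
    convert H using 1
    rw [hxd, hyd]
    push_cast
    ring
  have hdiff : Differentiable ℝ I := fun t => (key t).differentiableAt
  have hzero : ∀ t, deriv I t = 0 := fun t => (key t).deriv
  intro t₁ t₂
  exact is_const_of_deriv_eq_zero hdiff hzero t₁ t₂
end

section
/- Let ω : ℝ → ℝ be differentiable and nonvanishing and let x, y : ℝ → ℝ be twice differentiable functions satisfying the generalized (monkey-saddle) parametric Kapitza equations (d/dt)(x′/ω) + ω(x² − y²) + 2ω x y = 0 and (d/dt)(y′/ω) − ω(x² − y²) + 2ω x y = 0. Then I₁(t) = (1/2)[(x′(t)/ω(t))² − (y′(t)/ω(t))²] + ((1/3)x(t)³ − x(t)y(t)²) + (x(t)²y(t) − (1/3)y(t)³) is constant in t. -/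
/-- Along solutions of the generalized (monkey-saddle) parametric Kapitza
equations, I₁ = (1/2)[(x′/ω)² − (y′/ω)²] + ((1/3)x³ − xy²) + (x²y − (1/3)y³) is constant. -/
theorem monkey_saddle_parametric_kapitza_first_integral_I1
    (ω x y : ℝ → ℝ)
    (hω : Differentiable ℝ ω) (hω0 : ∀ t, ω t ≠ 0)
    (hx : Differentiable ℝ x) (hx' : Differentiable ℝ (deriv x))
    (hy : Differentiable ℝ y) (hy' : Differentiable ℝ (deriv y))
    (heq1 : ∀ t, deriv (fun s => deriv x s / ω s) t
      + ω t * ((x t) ^ 2 - (y t) ^ 2) + 2 * ω t * x t * y t = 0)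
    (heq2 : ∀ t, deriv (fun s => deriv y s / ω s) t
      - ω t * ((x t) ^ 2 - (y t) ^ 2) + 2 * ω t * x t * y t = 0) :
    ∀ t₁ t₂ : ℝ,
      (1 / 2) * ((deriv x t₁ / ω t₁) ^ 2 - (deriv y t₁ / ω t₁) ^ 2)
        + ((1 / 3) * (x t₁) ^ 3 - x t₁ * (y t₁) ^ 2)
        + ((x t₁) ^ 2 * y t₁ - (1 / 3) * (y t₁) ^ 3)
      = (1 / 2) * ((deriv x t₂ / ω t₂) ^ 2 - (deriv y t₂ / ω t₂) ^ 2)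
        + ((1 / 3) * (x t₂) ^ 3 - x t₂ * (y t₂) ^ 2)
        + ((x t₂) ^ 2 * y t₂ - (1 / 3) * (y t₂) ^ 3) := by
  intro t₁ t₂
  set u : ℝ → ℝ := fun s => deriv x s / ω s with hu_def
  set v : ℝ → ℝ := fun s => deriv y s / ω s with hv_def
  have hu : Differentiable ℝ u := hx'.div hω fun t => hω0 t
  have hv : Differentiable ℝ v := hy'.div hω fun t => hω0 t
  set F : ℝ → ℝ := fun s =>
    (1 / 2) * ((u s) ^ 2 - (v s) ^ 2)
      + ((1 / 3) * (x s) ^ 3 - x s * (y s) ^ 2)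
      + ((x s) ^ 2 * y s - (1 / 3) * (y s) ^ 3) with hF_def
  have key : ∀ t, HasDerivAt F 0 t := by
    intro t
    have hut : HasDerivAt u (deriv u t) t := (hu t).hasDerivAt
    have hvt : HasDerivAt v (deriv v t) t := (hv t).hasDerivAt
    have hxt : HasDerivAt x (deriv x t) t := (hx t).hasDerivAt
    have hyt : HasDerivAt y (deriv y t) t := (hy t).hasDerivAt
    have hA : deriv u t = -(ω t * ((x t) ^ 2 - (y t) ^ 2) + 2 * ω t * x t * y t) := by
      have := heq1 t; linarith
    have hB : deriv v t = ω t * ((x t) ^ 2 - (y t) ^ 2) - 2 * ω t * x t * y t := by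
      have := heq2 t; linarith
    have hdx : deriv x t = u t * ω t := (div_mul_cancel₀ (deriv x t) (hω0 t)).symm
    have hdy : deriv y t = v t * ω t := (div_mul_cancel₀ (deriv y t) (hω0 t)).symm
    have H := ((((hut.pow 2).sub (hvt.pow 2)).const_mul ((1:ℝ)/2)).add
        (((hxt.pow 3).const_mul ((1:ℝ)/3)).sub (hxt.mul (hyt.pow 2)))).add
        (((hxt.pow 2).mul hyt).sub ((hyt.pow 3).const_mul ((1:ℝ)/3)))
    convert H using 1
    case e'_4 => rfl
    case e'_5 => rfl
    case e'_8 => rfl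
    push_cast [Pi.pow_apply]
    rw [hA, hB, hdx, hdy]
    ring
  have hdiff : Differentiable ℝ F := fun t => (key t).differentiableAt
  have := is_const_of_deriv_eq_zero hdiff (fun t => (key t).deriv) t₁ t₂
  simpa [hF_def, hu_def, hv_def] using this
end

section
/- Let H, I₂ : ℝ⁴ → ℝ be defined on phase space coordinates (x, y, p_x, p_y) by H = (1/2)(p_x² − p_y²) + (1/2)(x² − y²) + x y and I₂ = −p_x p_y − (1/2)(x² − y²) + x y. Then the canonical Poisson bracket {H, I₂} = (∂H/∂x)(∂I₂/∂p_x) − (∂H/∂p_x)(∂I₂/∂x) + (∂H/∂y)(∂I₂/∂p_y) − (∂H/∂p_y)(∂I₂/∂y) vanishes identically on ℝ⁴. -/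
/-- The Kapitza Hamiltonian H = (1/2)(p_x² − p_y²) + (1/2)(x² − y²) + xy. -/
noncomputable def kapitzaH (x y px py : ℝ) : ℝ :=
  (1 / 2) * (px ^ 2 - py ^ 2) + (1 / 2) * (x ^ 2 - y ^ 2) + x * y

/-- The second integral I₂ = −p_x p_y − (1/2)(x² − y²) + xy. -/
noncomputable def kapitzaI2 (x y px py : ℝ) : ℝ :=
  -(px * py) - (1 / 2) * (x ^ 2 - y ^ 2) + x * y

lemma deriv_quad (a b c x : ℝ) :
    deriv (fun u : ℝ => a * u ^ 2 + b * u + c) x = 2 * a * x + b := by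
  have h1 : HasDerivAt (fun u : ℝ => u ^ 2) (2 * x) x := by
    simpa using (hasDerivAt_pow 2 x)
  have h : HasDerivAt (fun u : ℝ => a * u ^ 2 + b * u + c) (2 * a * x + b) x := by
    have : HasDerivAt (fun u : ℝ => a * u ^ 2 + b * u + c) (a * (2 * x) + b * 1) x := ((h1.const_mul a).add ((hasDerivAt_id x).const_mul b)).add_const c
    convert this using 1
    ring
  exact h.deriv

/-- The canonical Poisson bracket {H, I₂} vanishes identically on ℝ⁴. -/
theorem kapitza_poisson_bracket_vanishes :
    ∀ x y px py : ℝ,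
      deriv (fun u => kapitzaH u y px py) x * deriv (fun u => kapitzaI2 x y u py) px
      - deriv (fun u => kapitzaH x y u py) px * deriv (fun u => kapitzaI2 u y px py) x
      + deriv (fun u => kapitzaH x u px py) y * deriv (fun u => kapitzaI2 x y px u) py
      - deriv (fun u => kapitzaH x y px u) py * deriv (fun u => kapitzaI2 x u px py) y
      = 0 := by
  intro x y px py
  have h1 : deriv (fun u => kapitzaH u y px py) x = x + y := by
    have e : (fun u : ℝ => kapitzaH u y px py)
        = fun u : ℝ => (1/2)*u^2 + y*u + ((1/2)*(px^2-py^2) - (1/2)*y^2) := by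
      funext u; unfold kapitzaH; ring
    rw [e, deriv_quad]; ring
  have h2 : deriv (fun u => kapitzaH x u px py) y = x - y := by
    have e : (fun u : ℝ => kapitzaH x u px py)
        = fun u : ℝ => (-(1/2))*u^2 + x*u + ((1/2)*(px^2-py^2) + (1/2)*x^2) := by
      funext u; unfold kapitzaH; ring
    rw [e, deriv_quad]; ring
  have h3 : deriv (fun u => kapitzaH x y u py) px = px := by
    have e : (fun u : ℝ => kapitzaH x y u py)
        = fun u : ℝ => (1/2)*u^2 + 0*u + (-(1/2)*py^2 + (1/2)*(x^2-y^2) + x*y) := by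
      funext u; unfold kapitzaH; ring
    rw [e, deriv_quad]; ring
  have h4 : deriv (fun u => kapitzaH x y px u) py = -py := by
    have e : (fun u : ℝ => kapitzaH x y px u)
        = fun u : ℝ => (-(1/2))*u^2 + 0*u + ((1/2)*px^2 + (1/2)*(x^2-y^2) + x*y) := by
      funext u; unfold kapitzaH; ring
    rw [e, deriv_quad]; ring
  have g1 : deriv (fun u => kapitzaI2 u y px py) x = -x + y := by
    have e : (fun u : ℝ => kapitzaI2 u y px py)
        = fun u : ℝ => (-(1/2))*u^2 + y*u + (-(px*py) + (1/2)*y^2) := by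
      funext u; unfold kapitzaI2; ring
    rw [e, deriv_quad]; ring
  have g2 : deriv (fun u => kapitzaI2 x u px py) y = y + x := by
    have e : (fun u : ℝ => kapitzaI2 x u px py)
        = fun u : ℝ => (1/2)*u^2 + x*u + (-(px*py) - (1/2)*x^2) := by
      funext u; unfold kapitzaI2; ring
    rw [e, deriv_quad]; ring
  have g3 : deriv (fun u => kapitzaI2 x y u py) px = -py := by
    have e : (fun u : ℝ => kapitzaI2 x y u py)
        = fun u : ℝ => 0*u^2 + (-py)*u + (-(1/2)*(x^2-y^2) + x*y) := by
      funext u; unfold kapitzaI2; ring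
    rw [e, deriv_quad]; ring
  have g4 : deriv (fun u => kapitzaI2 x y px u) py = -px := by
    have e : (fun u : ℝ => kapitzaI2 x y px u)
        = fun u : ℝ => 0*u^2 + (-px)*u + (-(1/2)*(x^2-y^2) + x*y) := by
      funext u; unfold kapitzaI2; ring
    rw [e, deriv_quad]; ring
  rw [h1, h2, h3, h4, g1, g2, g3, g4]
  ring
end

section
/- Let a, b, Ω ∈ ℝ and suppose a + b·cos(Ω t) ≠ 0 for all t in an interval J. Let x : J → ℝ be twice differentiable and satisfy the modulated Mathieu equation x″(t) + [Ω b sin(Ω t) / (2(a + b cos(Ω t)))]·x′(t) + (a + b cos(Ω t))·x(t) = 0 on J. Then I(t) = (1/2)·[x′(t)²/(a + b cos(Ω t)) + x(t)²] is constant on J. -/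
/-- Along any solution of the modulated Mathieu equation
x″ + [Ωb sin(Ωt)/(2(a + b cos Ωt))]·x′ + (a + b cos Ωt)·x = 0 on an interval J
where a + b cos(Ωt) ≠ 0, the quantity I = (1/2)[x′²/(a + b cos Ωt) + x²] is constant. -/
theorem modulated_mathieu_first_integral
    (a b Ω : ℝ) (J : Set ℝ) (hJ : J.OrdConnected)
    (hne : ∀ t ∈ J, a + b * Real.cos (Ω * t) ≠ 0)
    (x x' x'' : ℝ → ℝ)
    (hx : ∀ t ∈ J, HasDerivAt x (x' t) t)
    (hx' : ∀ t ∈ J, HasDerivAt x' (x'' t) t)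
    (hode : ∀ t ∈ J, x'' t
      + (Ω * b * Real.sin (Ω * t) / (2 * (a + b * Real.cos (Ω * t)))) * x' t
      + (a + b * Real.cos (Ω * t)) * x t = 0) :
    ∀ t₁ ∈ J, ∀ t₂ ∈ J,
      (1 / 2) * ((x' t₁) ^ 2 / (a + b * Real.cos (Ω * t₁)) + (x t₁) ^ 2)
      = (1 / 2) * ((x' t₂) ^ 2 / (a + b * Real.cos (Ω * t₂)) + (x t₂) ^ 2) := by
  set I : ℝ → ℝ := fun t =>
    (1 / 2) * ((x' t) ^ 2 / (a + b * Real.cos (Ω * t)) + (x t) ^ 2) with hI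
  have key : ∀ t ∈ J, HasDerivAt I 0 t := by
    intro t ht
    have hρ : HasDerivAt (fun s => a + b * Real.cos (Ω * s))
        (b * (-Real.sin (Ω * t) * Ω)) t := by
      have h1 : HasDerivAt (fun s : ℝ => Ω * s) Ω t := by
        simpa using (hasDerivAt_id t).const_mul Ω
      simpa using ((h1.cos).const_mul b).const_add a
    have hρt := hne t ht
    have hd : HasDerivAt I
        ((1/2) * ((2 * x' t ^ 1 * x'' t * (a + b * Real.cos (Ω * t))
            - x' t ^ 2 * (b * (-Real.sin (Ω * t) * Ω)))
          / (a + b * Real.cos (Ω * t)) ^ 2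
          + 2 * x t ^ 1 * x' t)) t := by
      exact ((((hx' t ht).pow 2).div hρ hρt).add ((hx t ht).pow 2)).const_mul (1/2)
    convert hd using 1
    have hode' := hode t ht
    have h2 : x'' t = -((Ω * b * Real.sin (Ω * t) / (2 * (a + b * Real.cos (Ω * t)))) * x' t)
        - (a + b * Real.cos (Ω * t)) * x t := by linarith
    rw [h2]
    field_simp
    ring
  intro t₁ ht₁ t₂ ht₂
  have main : ∀ u ∈ J, ∀ v ∈ J, u ≤ v → I u = I v := by
    intro u hu v hv huv
    have hsub : Set.Icc u v ⊆ J := hJ.out hu hv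
    have hcont : ContinuousOn I (Set.Icc u v) := fun s hs =>
      ((key s (hsub hs)).continuousAt).continuousWithinAt
    have hderiv : ∀ s ∈ Set.Ico u v, HasDerivWithinAt I 0 (Set.Ici s) s := fun s hs =>
      (key s (hsub ⟨hs.1, hs.2.le⟩)).hasDerivWithinAt
    exact (constant_of_has_deriv_right_zero hcont hderiv v ⟨huv, le_refl v⟩).symm ▸ rfl
  rcases le_total t₁ t₂ with h | h
  · exact main t₁ ht₁ t₂ ht₂ h
  · exact (main t₂ ht₂ t₁ ht₁ h).symm
end

section
/- Let a, q, α₁, α₂ ∈ ℝ and let J be an interval on which a + 2q·cos(2t) > 0. Let x : J → ℝ be twice differentiable and satisfy the damped nonlinear Mathieu equation x″(t) + [2q sin(2t)/(a + 2q cos(2t))]·x′(t) + (a + 2q cos(2t))·(x(t) + α₁ x(t)² + α₂ x(t)³) = 0 on J. Then I(t) = (1/2)·[x′(t)²/(a + 2q cos(2t)) + x(t)² + (2α₁/3)x(t)³ + (α₂/2)x(t)⁴] is constant on J. -/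
/-- Along any solution of the damped nonlinear Mathieu equation
x″ + [2q sin 2t/(a + 2q cos 2t)]·x′ + (a + 2q cos 2t)·(x + α₁x² + α₂x³) = 0 on an
interval J where a + 2q cos 2t > 0, the quantity
I = (1/2)[x′²/(a + 2q cos 2t) + x² + (2α₁/3)x³ + (α₂/2)x⁴] is constant. -/
theorem damped_nonlinear_mathieu_first_integral
    (a q α₁ α₂ : ℝ) (J : Set ℝ) (hJ : J.OrdConnected)
    (hpos : ∀ t ∈ J, 0 < a + 2 * q * Real.cos (2 * t))
    (x x' x'' : ℝ → ℝ)
    (hx : ∀ t ∈ J, HasDerivAt x (x' t) t)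
    (hx' : ∀ t ∈ J, HasDerivAt x' (x'' t) t)
    (hode : ∀ t ∈ J, x'' t
      + (2 * q * Real.sin (2 * t) / (a + 2 * q * Real.cos (2 * t))) * x' t
      + (a + 2 * q * Real.cos (2 * t)) * (x t + α₁ * (x t) ^ 2 + α₂ * (x t) ^ 3) = 0) :
    ∀ t₁ ∈ J, ∀ t₂ ∈ J,
      (1 / 2) * ((x' t₁) ^ 2 / (a + 2 * q * Real.cos (2 * t₁))
        + (x t₁) ^ 2 + (2 * α₁ / 3) * (x t₁) ^ 3 + (α₂ / 2) * (x t₁) ^ 4)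
      = (1 / 2) * ((x' t₂) ^ 2 / (a + 2 * q * Real.cos (2 * t₂))
        + (x t₂) ^ 2 + (2 * α₁ / 3) * (x t₂) ^ 3 + (α₂ / 2) * (x t₂) ^ 4) := by
  set F : ℝ → ℝ := fun t => (1 / 2) * ((x' t) ^ 2 / (a + 2 * q * Real.cos (2 * t))
        + (x t) ^ 2 + (2 * α₁ / 3) * (x t) ^ 3 + (α₂ / 2) * (x t) ^ 4) with hF
  have key : ∀ t ∈ J, HasDerivAt F 0 t := by
    intro t ht
    have hd := hpos t ht
    have hdne : a + 2 * q * Real.cos (2 * t) ≠ 0 := ne_of_gt hd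
    -- derivative of the denominator
    have hcos : HasDerivAt (fun t : ℝ => a + 2 * q * Real.cos (2 * t))
        (-(4 * q * Real.sin (2 * t))) t := by
      have h1 : HasDerivAt (fun t : ℝ => 2 * t) 2 t := by
        simpa using (hasDerivAt_id t).const_mul 2
      have h2 := (Real.hasDerivAt_cos (2 * t)).comp t h1
      have := ((h2.const_mul (2 * q)).const_add a)
      refine this.congr_deriv ?_
      ring
    have hxd := hx t ht
    have hx'd := hx' t ht
    have hquot : HasDerivAt (fun t => (x' t) ^ 2 / (a + 2 * q * Real.cos (2 * t)))
        ((2 * x' t * x'' t * (a + 2 * q * Real.cos (2 * t))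
          - (x' t) ^ 2 * (-(4 * q * Real.sin (2 * t))))
          / (a + 2 * q * Real.cos (2 * t)) ^ 2) t := by
      have hnum : HasDerivAt (fun t => (x' t) ^ 2) (2 * x' t * x'' t) t := by
        have := hx'd.pow 2
        refine this.congr_deriv ?_; ring
      exact hnum.div hcos hdne
    have hrest : HasDerivAt (fun t => (x t) ^ 2 + (2 * α₁ / 3) * (x t) ^ 3
        + (α₂ / 2) * (x t) ^ 4)
        (2 * x t * x' t + (2 * α₁ / 3) * (3 * (x t) ^ 2 * x' t)
          + (α₂ / 2) * (4 * (x t) ^ 3 * x' t)) t := by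
      have h2 : HasDerivAt (fun t => (x t) ^ 2) (2 * x t * x' t) t := by
        have := hxd.pow 2; refine this.congr_deriv ?_; ring
      have h3 : HasDerivAt (fun t => (x t) ^ 3) (3 * (x t) ^ 2 * x' t) t := by
        have := hxd.pow 3; refine this.congr_deriv ?_ <;> push_cast <;> ring
      have h4 : HasDerivAt (fun t => (x t) ^ 4) (4 * (x t) ^ 3 * x' t) t := by
        have := hxd.pow 4; refine this.congr_deriv ?_ <;> push_cast <;> ring
      exact (h2.add (h3.const_mul _)).add (h4.const_mul _)
    have hFd := ((hquot.add hrest).const_mul (1 / 2))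
    have hode' : (a + 2 * q * Real.cos (2 * t)) * x'' t
        + 2 * q * Real.sin (2 * t) * x' t
        + (a + 2 * q * Real.cos (2 * t)) ^ 2
          * (x t + α₁ * (x t) ^ 2 + α₂ * (x t) ^ 3) = 0 := by
      have h := hode t ht
      field_simp at h
      linarith [h]
    have : (0:ℝ) = (1 / 2) * ((2 * x' t * x'' t * (a + 2 * q * Real.cos (2 * t))
          - (x' t) ^ 2 * (-(4 * q * Real.sin (2 * t))))
          / (a + 2 * q * Real.cos (2 * t)) ^ 2
        + (2 * x t * x' t + (2 * α₁ / 3) * (3 * (x t) ^ 2 * x' t)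
          + (α₂ / 2) * (4 * (x t) ^ 3 * x' t))) := by
      field_simp
      linear_combination (-4 * x' t) * hode'
    rw [this]
    have hfun : F = fun y => (1 / 2) * ((x' y) ^ 2 / (a + 2 * q * Real.cos (2 * y))
        + ((x y) ^ 2 + (2 * α₁ / 3) * (x y) ^ 3 + (α₂ / 2) * (x y) ^ 4)) := by
      funext y; rw [hF]; ring
    rw [hfun]
    exact hFd
  have hconv : Convex ℝ J := convex_iff_ordConnected.mpr hJ
  intro t₁ ht₁ t₂ ht₂
  have := hconv.norm_image_sub_le_of_norm_hasDerivWithin_le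
    (f := F) (f' := fun _ => (0 : ℝ)) (C := 0)
    (fun t ht => (key t ht).hasDerivWithinAt) (fun t ht => by simp) ht₂ ht₁
  simp only [zero_mul, norm_le_zero_iff, sub_eq_zero] at this
  exact this
end

section
/- Let a, q ∈ ℝ and let J be an interval on which a + 2q·cos(2t) > 0. Let x, y : J → ℝ be twice differentiable and satisfy the Mathieu–Kapitza system x″(t) + [2q sin(2t)/(a + 2q cos(2t))]·x′(t) + (a + 2q cos(2t))·(x(t) + y(t)) = 0 and y″(t) + [2q sin(2t)/(a + 2q cos(2t))]·y′(t) − (a + 2q cos(2t))·(x(t) − y(t)) = 0 on J. Then 𝓘₁(t) = (1/2)·[(x′(t)² − y′(t)²)/(a + 2q cos(2t)) + x(t)² − y(t)²] + x(t)y(t) is constant on J. -/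
/-- Along any solution of the Mathieu–Kapitza system on an interval J where
a + 2q cos 2t > 0, the quantity
𝓘₁ = (1/2)[(x′² − y′²)/(a + 2q cos 2t) + x² − y²] + xy is constant. -/
theorem mathieu_kapitza_first_integral_I1
    (a q : ℝ) (J : Set ℝ) (hJ : J.OrdConnected)
    (hpos : ∀ t ∈ J, 0 < a + 2 * q * Real.cos (2 * t))
    (x x' x'' y y' y'' : ℝ → ℝ)
    (hx : ∀ t ∈ J, HasDerivAt x (x' t) t)
    (hx' : ∀ t ∈ J, HasDerivAt x' (x'' t) t)
    (hy : ∀ t ∈ J, HasDerivAt y (y' t) t)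
    (hy' : ∀ t ∈ J, HasDerivAt y' (y'' t) t)
    (hode1 : ∀ t ∈ J, x'' t
      + (2 * q * Real.sin (2 * t) / (a + 2 * q * Real.cos (2 * t))) * x' t
      + (a + 2 * q * Real.cos (2 * t)) * (x t + y t) = 0)
    (hode2 : ∀ t ∈ J, y'' t
      + (2 * q * Real.sin (2 * t) / (a + 2 * q * Real.cos (2 * t))) * y' t
      - (a + 2 * q * Real.cos (2 * t)) * (x t - y t) = 0) :
    ∀ t₁ ∈ J, ∀ t₂ ∈ J,
      (1 / 2) * (((x' t₁) ^ 2 - (y' t₁) ^ 2) / (a + 2 * q * Real.cos (2 * t₁))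
        + (x t₁) ^ 2 - (y t₁) ^ 2) + x t₁ * y t₁
      = (1 / 2) * (((x' t₂) ^ 2 - (y' t₂) ^ 2) / (a + 2 * q * Real.cos (2 * t₂))
        + (x t₂) ^ 2 - (y t₂) ^ 2) + x t₂ * y t₂ := by
  set w : ℝ → ℝ := fun t => a + 2 * q * Real.cos (2 * t) with hw
  set f : ℝ → ℝ := fun t =>
    (1 / 2) * (((x' t) ^ 2 - (y' t) ^ 2) / w t + (x t) ^ 2 - (y t) ^ 2) + x t * y t with hf
  have hconv : Convex ℝ J := hJ.convex
  have key : ∀ t ∈ J, HasDerivAt f 0 t := by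
    intro t ht
    have hwt : w t ≠ 0 := (hpos t ht).ne'
    have hdw : HasDerivAt w (-(4 * q * Real.sin (2 * t))) t := by
      have h2t : HasDerivAt (fun s : ℝ => 2 * s) 2 t := by
        simpa using (hasDerivAt_id t).const_mul 2
      have := ((Real.hasDerivAt_cos (2 * t)).comp t h2t).const_mul (2 * q)
      have h := (this.const_add a)
      exact h.congr_deriv (by ring)
    have hd : HasDerivAt f
        ((1 / 2) * (((2 * x' t * x'' t - 2 * y' t * y'' t) * w t
            - ((x' t) ^ 2 - (y' t) ^ 2) * (-(4 * q * Real.sin (2 * t)))) / (w t) ^ 2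
          + 2 * x t * x' t - 2 * y t * y' t)
        + (x' t * y t + x t * y' t)) t := by
      have h1 : HasDerivAt (fun s => (x' s) ^ 2 - (y' s) ^ 2)
          (2 * x' t * x'' t - 2 * y' t * y'' t) t := by
        have hx2 := ((hx' t ht).pow 2)
        have hy2 := ((hy' t ht).pow 2)
        exact (hx2.sub hy2).congr_deriv (by ring)
      have hdiv := h1.div hdw hwt
      have hx2 := (hx t ht).pow 2
      have hy2 := (hy t ht).pow 2
      have hmul := (hx t ht).mul (hy t ht)
      have := (((hdiv.add hx2).sub hy2).const_mul (1/2 : ℝ)).add hmul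
      exact this.congr_deriv (by ring)
    convert hd using 1
    have h1 := hode1 t ht
    have h2 := hode2 t ht
    have hx''eq : x'' t = -(2 * q * Real.sin (2 * t) / w t) * x' t - w t * (x t + y t) := by
      rw [hw]; linarith [h1]
    have hy''eq : y'' t = -(2 * q * Real.sin (2 * t) / w t) * y' t + w t * (x t - y t) := by
      rw [hw]; linarith [h2]
    rw [hx''eq, hy''eq]
    field_simp
    ring
  intro t₁ h₁ t₂ h₂
  have h := hconv.norm_image_sub_le_of_norm_hasDerivWithin_le
    (f' := fun _ => (0 : ℝ)) (C := 0)
    (fun s hs => (key s hs).hasDerivWithinAt)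
    (fun s _ => by simp) h₂ h₁
  simp only [zero_mul, norm_le_zero_iff, sub_eq_zero] at h
  exact h
end

section
/- Let a, q ∈ ℝ and let J be an interval on which a + 2q·cos(2t) > 0. Let x, y : J → ℝ be twice differentiable and satisfy the Mathieu–Kapitza system x″(t) + [2q sin(2t)/(a + 2q cos(2t))]·x′(t) + (a + 2q cos(2t))·(x(t) + y(t)) = 0 and y″(t) + [2q sin(2t)/(a + 2q cos(2t))]·y′(t) − (a + 2q cos(2t))·(x(t) − y(t)) = 0 on J. Then 𝓘₂(t) = x′(t)y′(t)/(a + 2q cos(2t)) − (1/2)(x(t)² − y(t)²) + x(t)y(t) is constant on J. -/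
/-- Along any solution of the Mathieu–Kapitza system on an interval J where
a + 2q cos 2t > 0, the quantity
𝓘₂ = x′y′/(a + 2q cos 2t) − (1/2)(x² − y²) + xy is constant. -/
theorem mathieu_kapitza_first_integral_I2
    (a q : ℝ) (J : Set ℝ) (hJ : J.OrdConnected)
    (hpos : ∀ t ∈ J, 0 < a + 2 * q * Real.cos (2 * t))
    (x x' x'' y y' y'' : ℝ → ℝ)
    (hx : ∀ t ∈ J, HasDerivAt x (x' t) t)
    (hx' : ∀ t ∈ J, HasDerivAt x' (x'' t) t)
    (hy : ∀ t ∈ J, HasDerivAt y (y' t) t)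
    (hy' : ∀ t ∈ J, HasDerivAt y' (y'' t) t)
    (hode1 : ∀ t ∈ J, x'' t
      + (2 * q * Real.sin (2 * t) / (a + 2 * q * Real.cos (2 * t))) * x' t
      + (a + 2 * q * Real.cos (2 * t)) * (x t + y t) = 0)
    (hode2 : ∀ t ∈ J, y'' t
      + (2 * q * Real.sin (2 * t) / (a + 2 * q * Real.cos (2 * t))) * y' t
      - (a + 2 * q * Real.cos (2 * t)) * (x t - y t) = 0) :
    ∀ t₁ ∈ J, ∀ t₂ ∈ J,
      x' t₁ * y' t₁ / (a + 2 * q * Real.cos (2 * t₁))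
        - (1 / 2) * ((x t₁) ^ 2 - (y t₁) ^ 2) + x t₁ * y t₁
      = x' t₂ * y' t₂ / (a + 2 * q * Real.cos (2 * t₂))
        - (1 / 2) * ((x t₂) ^ 2 - (y t₂) ^ 2) + x t₂ * y t₂ := by
  set F : ℝ → ℝ := fun t => x' t * y' t / (a + 2 * q * Real.cos (2 * t))
      - (1 / 2) * ((x t) ^ 2 - (y t) ^ 2) + x t * y t with hFdef
  have key : ∀ t ∈ J, HasDerivAt F 0 t := by
    intro t ht
    have hne : (a + 2 * q * Real.cos (2 * t)) ≠ 0 := (hpos t ht).ne'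
    have h2t : HasDerivAt (fun s : ℝ => 2 * s) 2 t := by
      simpa using (hasDerivAt_id t).const_mul 2
    have hω : HasDerivAt (fun s => a + 2 * q * Real.cos (2 * s))
        (2 * q * (-Real.sin (2 * t) * 2)) t := by
      have := ((Real.hasDerivAt_cos (2 * t)).comp t h2t).const_mul (2 * q)
      simpa [mul_comm, mul_assoc, mul_left_comm] using this.const_add a
    have h1 : HasDerivAt (fun s => x' s * y' s / (a + 2 * q * Real.cos (2 * s)))
        (((x'' t * y' t + x' t * y'' t) * (a + 2 * q * Real.cos (2 * t))
          - x' t * y' t * (2 * q * (-Real.sin (2 * t) * 2)))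
          / (a + 2 * q * Real.cos (2 * t)) ^ 2) t :=
      ((hx' t ht).mul (hy' t ht)).div hω hne
    have h2 : HasDerivAt (fun s => (1 / 2 : ℝ) * ((x s) ^ 2 - (y s) ^ 2))
        ((1 / 2) * (((2 : ℕ) * x t ^ 1) * x' t - ((2 : ℕ) * y t ^ 1) * y' t)) t :=
      (((hx t ht).pow 2).sub ((hy t ht).pow 2)).const_mul (1 / 2)
    have h3 : HasDerivAt (fun s => x s * y s) (x' t * y t + x t * y' t) t :=
      (hx t ht).mul (hy t ht)
    have hD := (h1.sub h2).add h3
    have e1 := hode1 t ht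
    have e2 := hode2 t ht
    have e1' : x'' t * (a + 2 * q * Real.cos (2 * t))
        = -(2 * q * Real.sin (2 * t) * x' t)
          - (a + 2 * q * Real.cos (2 * t)) ^ 2 * (x t + y t) := by
      field_simp at e1; nlinarith [e1]
    have e2' : y'' t * (a + 2 * q * Real.cos (2 * t))
        = -(2 * q * Real.sin (2 * t) * y' t)
          + (a + 2 * q * Real.cos (2 * t)) ^ 2 * (x t - y t) := by
      field_simp at e2; nlinarith [e2]
    have h : ((x'' t * y' t + x' t * y'' t) * (a + 2 * q * Real.cos (2 * t))
          - x' t * y' t * (2 * q * (-Real.sin (2 * t) * 2)))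
        - ((1 / 2) * (((2 : ℕ) * x t ^ 1) * x' t - ((2 : ℕ) * y t ^ 1) * y' t)
          - (x' t * y t + x t * y' t)) * (a + 2 * q * Real.cos (2 * t)) ^ 2 = 0 := by
      push_cast
      linear_combination y' t * e1' + x' t * e2'
    have hzero : ((x'' t * y' t + x' t * y'' t) * (a + 2 * q * Real.cos (2 * t))
          - x' t * y' t * (2 * q * (-Real.sin (2 * t) * 2)))
          / (a + 2 * q * Real.cos (2 * t)) ^ 2
        - (1 / 2) * (((2 : ℕ) * x t ^ 1) * x' t - ((2 : ℕ) * y t ^ 1) * y' t)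
        + (x' t * y t + x t * y' t) = 0 := by
      field_simp
      push_cast at h ⊢
      linear_combination 2 * h
    exact hzero ▸ hD
  have hsub : ∀ u ∈ J, ∀ v ∈ J, u ≤ v → F u = F v := by
    intro u hu v hv huv
    have hIcc : Set.Icc u v ⊆ J := hJ.out hu hv
    have := constant_of_has_deriv_right_zero (f := F) (a := u) (b := v)
      (fun s hs => (key s (hIcc hs)).continuousAt.continuousWithinAt)
      (fun s hs => (key s (hIcc (Set.Ico_subset_Icc_self hs))).hasDerivWithinAt)
    exact (this v (Set.right_mem_Icc.2 huv)).symm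
  intro t₁ h₁ t₂ h₂
  rcases le_total t₁ t₂ with h | h
  · exact hsub t₁ h₁ t₂ h₂ h
  · exact (hsub t₂ h₂ t₁ h₁ h).symm
end

section
/- Let a, q ∈ ℝ and let J be an interval on which a + 2q·cos(2t) > 0. Let x, y : J → ℝ be twice differentiable and satisfy the nonlinear Mathieu–Kapitza system x″(t) + [2q sin(2t)/(a + 2q cos(2t))]·x′(t) + (a + 2q cos(2t))·(x(t)² − y(t)² + 2x(t)y(t)) = 0 and y″(t) + [2q sin(2t)/(a + 2q cos(2t))]·y′(t) − (a + 2q cos(2t))·(x(t)² − y(t)² − 2x(t)y(t)) = 0 on J. Then I(t) = (1/2)·(x′(t)² − y′(t)²)/(a + 2q cos(2t)) + ((1/3)x(t)³ − x(t)y(t)²) + (x(t)²y(t) − (1/3)y(t)³) is constant on J. -/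
/-- Along any solution of the nonlinear (monkey-saddle) Mathieu–Kapitza
system on an interval J where a + 2q cos 2t > 0, the quantity
I = (1/2)(x′² − y′²)/(a + 2q cos 2t) + ((1/3)x³ − xy²) + (x²y − (1/3)y³) is constant. -/
theorem nonlinear_mathieu_kapitza_first_integral
    (a q : ℝ) (J : Set ℝ) (hJ : J.OrdConnected)
    (hpos : ∀ t ∈ J, 0 < a + 2 * q * Real.cos (2 * t))
    (x x' x'' y y' y'' : ℝ → ℝ)
    (hx : ∀ t ∈ J, HasDerivAt x (x' t) t)
    (hx' : ∀ t ∈ J, HasDerivAt x' (x'' t) t)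
    (hy : ∀ t ∈ J, HasDerivAt y (y' t) t)
    (hy' : ∀ t ∈ J, HasDerivAt y' (y'' t) t)
    (hode1 : ∀ t ∈ J, x'' t
      + (2 * q * Real.sin (2 * t) / (a + 2 * q * Real.cos (2 * t))) * x' t
      + (a + 2 * q * Real.cos (2 * t)) * ((x t) ^ 2 - (y t) ^ 2 + 2 * x t * y t) = 0)
    (hode2 : ∀ t ∈ J, y'' t
      + (2 * q * Real.sin (2 * t) / (a + 2 * q * Real.cos (2 * t))) * y' t
      - (a + 2 * q * Real.cos (2 * t)) * ((x t) ^ 2 - (y t) ^ 2 - 2 * x t * y t) = 0) :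
    ∀ t₁ ∈ J, ∀ t₂ ∈ J,
      (1 / 2) * (((x' t₁) ^ 2 - (y' t₁) ^ 2) / (a + 2 * q * Real.cos (2 * t₁)))
        + ((1 / 3) * (x t₁) ^ 3 - x t₁ * (y t₁) ^ 2)
        + ((x t₁) ^ 2 * y t₁ - (1 / 3) * (y t₁) ^ 3)
      = (1 / 2) * (((x' t₂) ^ 2 - (y' t₂) ^ 2) / (a + 2 * q * Real.cos (2 * t₂)))
        + ((1 / 3) * (x t₂) ^ 3 - x t₂ * (y t₂) ^ 2)
        + ((x t₂) ^ 2 * y t₂ - (1 / 3) * (y t₂) ^ 3) := by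
  intro t₁ ht₁ t₂ ht₂
  set f : ℝ → ℝ := fun t =>
    (1 / 2) * (((x' t) ^ 2 - (y' t) ^ 2) / (a + 2 * q * Real.cos (2 * t)))
      + ((1 / 3) * (x t) ^ 3 - x t * (y t) ^ 2)
      + ((x t) ^ 2 * y t - (1 / 3) * (y t) ^ 3) with hfdef
  have key : ∀ t ∈ J, HasDerivWithinAt f (0 : ℝ) J t := by
    intro t ht
    have hw : 0 < a + 2 * q * Real.cos (2 * t) := hpos t ht
    have hw' : HasDerivAt (fun s => a + 2 * q * Real.cos (2 * s))
        (-(4 * q * Real.sin (2 * t))) t := by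
      have h2 : HasDerivAt (fun s : ℝ => 2 * s) 2 t := by
        simpa using (hasDerivAt_id t).const_mul 2
      have hc := (Real.hasDerivAt_cos (2 * t)).comp t h2
      have := (hc.const_mul (2 * q)).const_add a
      refine this.congr_deriv ?_
      ring
    have hx2 := hx t ht; have hy2 := hy t ht
    have hx'2 := hx' t ht; have hy'2 := hy' t ht
    have h1 : HasDerivAt (fun s => (x' s) ^ 2 - (y' s) ^ 2)
        (2 * x' t * x'' t - 2 * y' t * y'' t) t := by
      have := (hx'2.pow 2).sub (hy'2.pow 2)
      refine this.congr_deriv ?_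
      ring
    have hdiv := h1.div hw' hw.ne'
    have hpot1 : HasDerivAt (fun s => (1 / 3) * (x s) ^ 3 - x s * (y s) ^ 2)
        ((1 / 3) * (3 * (x t) ^ 2 * x' t) - (x' t * (y t) ^ 2 + x t * (2 * y t * y' t))) t := by
      have h3 := (hx2.pow 3).const_mul ((1:ℝ)/3)
      have h4 := hx2.mul (hy2.pow 2)
      have := h3.sub h4
      refine this.congr_deriv ?_
      simp only [Pi.pow_apply]
      ring
    have hpot2 : HasDerivAt (fun s => (x s) ^ 2 * y s - (1 / 3) * (y s) ^ 3)
        ((2 * x t * x' t * y t + (x t) ^ 2 * y' t) - (1 / 3) * (3 * (y t) ^ 2 * y' t)) t := by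
      have h3 := (hx2.pow 2).mul hy2
      have h4 := (hy2.pow 3).const_mul ((1:ℝ)/3)
      have := h3.sub h4
      refine this.congr_deriv ?_
      simp only [Pi.pow_apply]
      ring
    have htot := ((hdiv.const_mul ((1:ℝ)/2)).add hpot1).add hpot2
    have hxx : x'' t = -(2 * q * Real.sin (2 * t) / (a + 2 * q * Real.cos (2 * t))) * x' t
        - (a + 2 * q * Real.cos (2 * t)) * ((x t) ^ 2 - (y t) ^ 2 + 2 * x t * y t) := by
      have := hode1 t ht; linarith
    have hyy : y'' t = -(2 * q * Real.sin (2 * t) / (a + 2 * q * Real.cos (2 * t))) * y' t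
        + (a + 2 * q * Real.cos (2 * t)) * ((x t) ^ 2 - (y t) ^ 2 - 2 * x t * y t) := by
      have := hode2 t ht; linarith
    have hzero : (1:ℝ)/2 * ((2 * x' t * x'' t - 2 * y' t * y'' t) * (a + 2 * q * Real.cos (2 * t))
          - ((x' t) ^ 2 - (y' t) ^ 2) * (-(4 * q * Real.sin (2 * t)))) / (a + 2 * q * Real.cos (2 * t)) ^ 2
        + ((1 / 3) * (3 * (x t) ^ 2 * x' t) - (x' t * (y t) ^ 2 + x t * (2 * y t * y' t)))
        + ((2 * x t * x' t * y t + (x t) ^ 2 * y' t) - (1 / 3) * (3 * (y t) ^ 2 * y' t)) = 0 := by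
      rw [hxx, hyy]
      field_simp
      ring
    have : HasDerivAt f (0 : ℝ) t := by
      rw [hfdef]
      refine htot.congr_deriv ?_
      rw [← hzero]
      ring
    exact this.hasDerivWithinAt
  have hconv : Convex ℝ J := hJ.convex
  have hle := hconv.norm_image_sub_le_of_norm_hasDerivWithin_le
    (C := 0) (f' := fun _ => (0:ℝ)) key (fun s hs => by simp) ht₁ ht₂
  have h0 : ‖f t₂ - f t₁‖ ≤ 0 := by simpa using hle
  have heq : f t₁ = f t₂ := by
    have := le_antisymm h0 (norm_nonneg _)
    have := sub_eq_zero.mp (norm_eq_zero.mp this)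
    linarith
  simpa [hfdef] using heq
end

section
/- Let a, b ∈ ℝ with a ≠ 0, let λ ∈ ℂ, and let c₁, c₂ ∈ ℂ with (c₁, c₂) ≠ (0, 0). If the functions x(t) = c₁·exp(λt) and y(t) = c₂·exp(λt) satisfy the Kapitza rotating shaft equations x″(t) + a·y(t) + b·x(t) = 0 and y″(t) − a·x(t) + b·y(t) = 0 for all t ∈ ℝ, then (λ² + b)² + a² = 0; in particular λ² + b is purely imaginary and nonzero, so the system is unstable for every a ≠ 0. -/
lemma deriv_cexp_mul (c lam : ℂ) :
    deriv (fun t : ℝ => c * Complex.exp (lam * t)) =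
      fun t : ℝ => c * lam * Complex.exp (lam * t) := by
  funext t
  have h : HasDerivAt (fun t : ℝ => c * Complex.exp (lam * t))
      (c * (Complex.exp (lam * t) * lam)) t := by
    have h1 : HasDerivAt (fun t : ℝ => lam * (t : ℂ)) lam t := by
      simpa using ((hasDerivAt_id t).ofReal_comp.const_mul lam)
    exact (h1.cexp).const_mul c
  rw [h.deriv]; ring

/-- If the Kapitza rotating shaft equations x″ + a y + b x = 0,
y″ − a x + b y = 0 (with a ≠ 0) admit an exponential solution
x(t) = c₁·exp(λt), y(t) = c₂·exp(λt) with (c₁, c₂) ≠ (0, 0), then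
(λ² + b)² + a² = 0; in particular λ² + b is purely imaginary and nonzero,
so the system is unstable for every a ≠ 0. -/
theorem kapitza_shaft_characteristic_equation
    (a b : ℝ) (ha : a ≠ 0) (lam : ℂ) (c₁ c₂ : ℂ) (hc : (c₁, c₂) ≠ (0, 0))
    (x y : ℝ → ℂ)
    (hxdef : x = fun t : ℝ => c₁ * Complex.exp (lam * t))
    (hydef : y = fun t : ℝ => c₂ * Complex.exp (lam * t))
    (h1 : ∀ t : ℝ, deriv (deriv x) t + (a : ℂ) * y t + (b : ℂ) * x t = 0)
    (h2 : ∀ t : ℝ, deriv (deriv y) t - (a : ℂ) * x t + (b : ℂ) * y t = 0) :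
    (lam ^ 2 + (b : ℂ)) ^ 2 + (a : ℂ) ^ 2 = 0
    ∧ (lam ^ 2 + (b : ℂ)).re = 0
    ∧ lam ^ 2 + (b : ℂ) ≠ 0 := by
  have hx2 : deriv (deriv x) = fun t : ℝ => c₁ * lam * lam * Complex.exp (lam * t) := by
    rw [hxdef, deriv_cexp_mul, deriv_cexp_mul]
  have hy2 : deriv (deriv y) = fun t : ℝ => c₂ * lam * lam * Complex.exp (lam * t) := by
    rw [hydef, deriv_cexp_mul, deriv_cexp_mul]
  have e1 := h1 0
  have e2 := h2 0
  rw [hx2, hxdef, hydef] at e1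
  rw [hy2, hxdef, hydef] at e2
  simp only [Complex.ofReal_zero, mul_zero, Complex.exp_zero, mul_one] at e1 e2
  -- e1 : c₁ * lam * lam + a * c₂ + b * c₁ = 0
  -- e2 : c₂ * lam * lam - a * c₁ + b * c₂ = 0
  set μ : ℂ := lam ^ 2 + (b : ℂ) with hμ
  have k1 : μ * c₁ = -(a : ℂ) * c₂ := by rw [hμ]; linear_combination e1
  have k2 : μ * c₂ = (a : ℂ) * c₁ := by rw [hμ]; linear_combination e2
  have hchar : μ ^ 2 + (a : ℂ) ^ 2 = 0 := by
    rcases (by simpa [Prod.ext_iff] using hc : ¬ (c₁ = 0 ∧ c₂ = 0)) with h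
    by_cases hc1 : c₁ = 0
    · have hc2 : c₂ ≠ 0 := fun h2 => h ⟨hc1, h2⟩
      have : (μ ^ 2 + (a : ℂ) ^ 2) * c₂ = 0 := by
        linear_combination μ * k2 + (a : ℂ) * k1
      exact (mul_eq_zero.1 this).resolve_right hc2
    · have : (μ ^ 2 + (a : ℂ) ^ 2) * c₁ = 0 := by
        linear_combination μ * k1 - (a : ℂ) * k2
      exact (mul_eq_zero.1 this).resolve_right hc1
  refine ⟨hchar, ?_, ?_⟩
  · have hfac : (μ - Complex.I * a) * (μ + Complex.I * a) = 0 := by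
      linear_combination hchar - Complex.I_sq * (a:ℂ)^2
    rcases mul_eq_zero.1 hfac with h | h
    · have : μ = Complex.I * a := by linear_combination h
      simp [this]
    · have : μ = -(Complex.I * a) := by linear_combination h
      simp [this]
  · intro h0
    rw [h0] at hchar
    simp at hchar
    exact ha (by exact_mod_cast hchar)
end
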